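/- For every real m > 0, set k = −1/√3 and define σ_m(ρ) = −3/(2√(V_m(ρ))) + V_m'(ρ)/(4V_m(ρ)) + 1/ρ on (ρ₊(m), ∞). Then θ_m and β_m are differentiable on (ρ₊(m), ∞) and satisfy, for all ρ > ρ₊(m): θ_m'(ρ) = σ_m(ρ)·((k/β_m(ρ))·(k·θ_m(ρ) − 1) + θ_m(ρ)·((θ_m(ρ) + k)² − 4/3)) and β_m'(ρ) = σ_m(ρ)·(2/3 − β_m(ρ)·((θ_m(ρ) + k)² + 2/3)). (Equivalently: in the self-similar coordinate s with ds/dρ = σ_m(ρ), the pair (θ_m, β_m) is an orbit of the autonomous system dθ/ds = (k/β)(kθ − 1) + θ((θ + k)² − (1 + k²)), dβ/ds = 1 − k² − β((θ + k)² + (1 − k²)) with k² = 1/3; this identifies the Lorentzian Hawking–Page solution with an orbit of the reduced system.) -/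

import Mathlib

noncomputable def Vhp (m ρ : ℝ) : ℝ := ρ ^ 2 + 1 - 2 * m / ρ

noncomputable def Vhp' (m ρ : ℝ) : ℝ := 2 * ρ + 2 * m / ρ ^ 2

/-- `β_m`, the renormalized self-similar quantity of the Lorentzian Hawking–Page solution. -/
noncomputable def betaHP (m ρ : ℝ) : ℝ :=
  (1 / 3) * (3 / 2 - Real.sqrt (Vhp m ρ) / ρ - Vhp' m ρ / (4 * Real.sqrt (Vhp m ρ)))

/-- `θ_m`, for the + sign of the scalar field (`k = −1/√3`). -/
noncomputable def thetaHP (m ρ : ℝ) : ℝ :=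
  Real.sqrt 3 * ρ * (Vhp' m ρ - 2 * Real.sqrt (Vhp m ρ)) /
    (4 * Vhp m ρ + ρ * Vhp' m ρ - 6 * ρ * Real.sqrt (Vhp m ρ))

/-- `σ_m = ds/dρ`, the derivative of the self-similar coordinate `s` with respect to `ρ`. -/
noncomputable def sigmaHP (m ρ : ℝ) : ℝ :=
  -3 / (2 * Real.sqrt (Vhp m ρ)) + Vhp' m ρ / (4 * Vhp m ρ) + 1 / ρ

set_option maxHeartbeats 2000000 in
/-- For every `m > 0`, with `k = −1/√3`, the pair `(θ_m, β_m)` is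
differentiable on `(ρ₊(m), ∞)` and satisfies there
`θ_m' = σ_m·((k/β_m)(kθ_m − 1) + θ_m((θ_m + k)² − 4/3))` and
`β_m' = σ_m·(2/3 − β_m((θ_m + k)² + 2/3))`: i.e. in the self-similar coordinate `s`
with `ds/dρ = σ_m`, `(θ_m, β_m)` is an orbit of the reduced autonomous system with
`k² = 1/3`. -/
theorem hawking_page_is_orbit (m : ℝ) (hm : 0 < m) (ρp : ℝ)
    (hρp : 0 < ρp ∧ ρp ^ 3 + ρp - 2 * m = 0) :
    ∀ ρ : ℝ, ρp < ρ →
      HasDerivAt (fun x => thetaHP m x)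
        (sigmaHP m ρ *
          (((-1 / Real.sqrt 3) / betaHP m ρ) * ((-1 / Real.sqrt 3) * thetaHP m ρ - 1) +
            thetaHP m ρ * ((thetaHP m ρ + (-1 / Real.sqrt 3)) ^ 2 - 4 / 3))) ρ ∧
      HasDerivAt (fun x => betaHP m x)
        (sigmaHP m ρ *
          (2 / 3 - betaHP m ρ * ((thetaHP m ρ + (-1 / Real.sqrt 3)) ^ 2 + 2 / 3))) ρ := by
  obtain ⟨hp0, hroot⟩ := hρp
  intro ρ hρ
  have hρ0 : 0 < ρ := hp0.trans hρ
  have hne : ρ ≠ 0 := hρ0.ne'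
  have hpos : 0 < ρ ^ 3 + ρ - 2 * m := by
    nlinarith [mul_pos (sub_pos.mpr hρ) (by nlinarith : (0:ℝ) < ρ ^ 2 + ρ * ρp + ρp ^ 2)]
  have hV : 0 < Vhp m ρ := by
    have h : Vhp m ρ = (ρ ^ 3 + ρ - 2 * m) / ρ := by unfold Vhp; field_simp
    rw [h]; positivity
  set s := Real.sqrt (Vhp m ρ) with hsdef
  have hs : 0 < s := Real.sqrt_pos.mpr hV
  have hs2 : s ^ 2 = Vhp m ρ := Real.sq_sqrt hV.le
  set t := Real.sqrt 3 with htdef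
  have ht : 0 < t := Real.sqrt_pos.mpr (by norm_num)
  have ht2 : t ^ 2 = 3 := Real.sq_sqrt (by norm_num)
  have hVe : Vhp m ρ = s ^ 2 := hs2.symm
  have hV'e : Vhp' m ρ = 2 * ρ + 2 * m / ρ ^ 2 := rfl
  have hmval : m = ρ * (ρ ^ 2 + 1 - s ^ 2) / 2 := by
    have h := hs2
    rw [Vhp] at h
    field_simp at h ⊢
    linarith
  -- derivatives of building blocks
  have hVd : HasDerivAt (fun x => Vhp m x) (Vhp' m ρ) ρ := by
    have h1 : HasDerivAt (fun x : ℝ => x ^ 2 + 1 - 2 * m / x)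
        (2 * ρ + 2 * m / ρ ^ 2) ρ := by
      have ha : HasDerivAt (fun x : ℝ => x ^ 2 + 1) (2 * ρ) ρ := by
        simpa using (hasDerivAt_pow 2 ρ).add_const 1
      have hb : HasDerivAt (fun x : ℝ => 2 * m / x) (2 * m * (-(ρ ^ 2)⁻¹)) ρ := by
        simpa [div_eq_mul_inv] using (hasDerivAt_inv hne).const_mul (2 * m)
      have := ha.sub hb
      refine this.congr_deriv ?_
      ring
    exact h1
  have hV'd : HasDerivAt (fun x => Vhp' m x) (2 - 4 * m / ρ ^ 3) ρ := by
    have h1 : HasDerivAt (fun x : ℝ => 2 * x + 2 * m / x ^ 2)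
        (2 - 4 * m / ρ ^ 3) ρ := by
      have ha : HasDerivAt (fun x : ℝ => 2 * x) 2 ρ := by
        simpa using (hasDerivAt_id' ρ).const_mul 2
      have hb : HasDerivAt (fun x : ℝ => 2 * m / x ^ 2)
          (2 * m * (-(2 * ρ) / ((ρ ^ 2) ^ 2))) ρ := by
        have hp : HasDerivAt (fun x : ℝ => x ^ 2) (2 * ρ) ρ := by
          simpa using hasDerivAt_pow 2 ρ
        have := (hp.inv (pow_ne_zero 2 hne)).const_mul (2 * m)
        simpa [div_eq_mul_inv] using this
      have := ha.add hb
      refine this.congr_deriv ?_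
      field_simp
      ring
    exact h1
  have hsd : HasDerivAt (fun x => Real.sqrt (Vhp m x)) (Vhp' m ρ / (2 * s)) ρ :=
    hVd.sqrt hV.ne'
  -- β derivative
  have hb1 := hsd.div (hasDerivAt_id' ρ) hne
  have h4s : (4 : ℝ) * s ≠ 0 := by positivity
  have hb2 := hV'd.div (hsd.const_mul 4) h4s
  have hbd := ((hb1.const_sub (3 / 2)).sub hb2).const_mul ((1 : ℝ) / 3)
  have hbfun : (fun x => betaHP m x) =
      (fun x => 1 / 3 * (3 / 2 - Real.sqrt (Vhp m x) / x -
        Vhp' m x / (4 * Real.sqrt (Vhp m x)))) := rfl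
  -- θ derivative
  have hnum := ((hasDerivAt_id' ρ).const_mul (Real.sqrt 3)).mul (hV'd.sub (hsd.const_mul 2))
  have hden := ((hVd.const_mul 4).add ((hasDerivAt_id' ρ).mul hV'd)).sub
      (((hasDerivAt_id' ρ).const_mul 6).mul hsd)
  have hD : (0 : ℝ) < 4 * Vhp m ρ + ρ * Vhp' m ρ - 6 * ρ * s := by
    have h : 4 * Vhp m ρ + ρ * Vhp' m ρ - 6 * ρ * s = 3 * (s - ρ) ^ 2 + 1 := by
      rw [hVe, hV'e, hmval]; field_simp; ring
    rw [h]; positivity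
  have hthd := hnum.div hden hD.ne'
  have hthfun : (fun x => thetaHP m x) =
      (fun x => Real.sqrt 3 * x * (Vhp' m x - 2 * Real.sqrt (Vhp m x)) /
        (4 * Vhp m x + x * Vhp' m x - 6 * x * Real.sqrt (Vhp m x))) := rfl
  -- value lemmas
  have hDval : (3 : ℝ) * (s - ρ) ^ 2 + 1 ≠ 0 := by positivity
  have hθval : thetaHP m ρ = t * (3 * ρ ^ 2 + 1 - s ^ 2 - 2 * ρ * s) / (3 * (s - ρ) ^ 2 + 1) := by
    rw [thetaHP, ← htdef, ← hsdef, hVe, hV'e, hmval]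
    rw [show (4 : ℝ) * s ^ 2 + ρ * (2 * ρ + 2 * (ρ * (ρ ^ 2 + 1 - s ^ 2) / 2) / ρ ^ 2) -
        6 * ρ * s = 3 * (s - ρ) ^ 2 + 1 from by field_simp; ring]
    rw [div_eq_div_iff hDval hDval]
    field_simp
    ring
  have hβval : betaHP m ρ = -(3 * (s - ρ) ^ 2 + 1) / (12 * ρ * s) := by
    rw [betaHP, ← hsdef, hV'e, hmval]
    field_simp
    ring
  have hσval : sigmaHP m ρ = (3 * (s - ρ) ^ 2 + 1) / (4 * ρ * s ^ 2) := by
    rw [sigmaHP, ← hsdef, hVe, hV'e, hmval]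
    field_simp
    ring
  have hk : (-1 : ℝ) / t = -t / 3 := by
    rw [div_eq_div_iff ht.ne' (by norm_num : (3:ℝ) ≠ 0)]; linear_combination ht2
  have hT3 : t ^ 3 = 3 * t := by linear_combination t * ht2
  have hT4 : t ^ 4 = 9 := by linear_combination (t ^ 2 + 3) * ht2
  have hT5 : t ^ 5 = 9 * t := by linear_combination (t ^ 3 + 3 * t) * ht2
  have hT6 : t ^ 6 = 27 := by linear_combination (t ^ 4 + 3 * t ^ 2 + 9) * ht2
  have hT7 : t ^ 7 = 27 * t := by linear_combination (t ^ 5 + 3 * t ^ 3 + 9 * t) * ht2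
  have hT8 : t ^ 8 = 81 := by linear_combination (t ^ 6 + 3 * t ^ 4 + 9 * t ^ 2 + 27) * ht2
  have hnum' : HasDerivAt (fun y => Real.sqrt 3 * y * (Vhp' m y - 2 * Real.sqrt (Vhp m y)))
      (t * (s ^ 3 - s - ρ - ρ * s ^ 2 + 3 * ρ ^ 2 * s - 3 * ρ ^ 3) / (ρ * s)) ρ := by
    refine hnum.congr_deriv ?_
    simp only [Pi.sub_apply]
    rw [← hsdef, ← htdef, hV'e, hmval]
    field_simp
    ring
  have hden' : HasDerivAt (fun x => 4 * Vhp m x + x * Vhp' m x - 6 * x * Real.sqrt (Vhp m x))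
      (3 * (s - s ^ 3 - ρ - ρ * s ^ 2 + 5 * ρ ^ 2 * s - 3 * ρ ^ 3) / (ρ * s)) ρ := by
    refine hden.congr_deriv ?_
    rw [← hsdef, hV'e, hmval]
    field_simp
    ring
  have hthd2 := hnum'.div hden' hD.ne'
  have hbd' : HasDerivAt
      (fun y => 1 / 3 * (3 / 2 - Real.sqrt (Vhp m y) / y - Vhp' m y / (4 * Real.sqrt (Vhp m y))))
      (1 / 3 * (-((3 * ρ ^ 2 + 1 - 3 * s ^ 2) / (2 * s * ρ ^ 2)) -
        (4 * s ^ 2 * (s ^ 2 - 1) - (3 * ρ ^ 2 + 1 - s ^ 2) ^ 2) / (8 * ρ ^ 2 * s ^ 3))) ρ := by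
    refine hbd.congr_deriv ?_
    rw [← hsdef, hV'e, hmval]
    field_simp
    ring
  constructor
  · rw [hthfun]
    refine hthd2.congr_deriv ?_
    symm
    rw [hθval, hβval, hσval, hk, ← hsdef, ← htdef, hVe, hV'e, hmval]
    rw [show (4:ℝ) * s ^ 2 + ρ * (2 * ρ + 2 * (ρ * (ρ ^ 2 + 1 - s ^ 2) / 2) / ρ ^ 2) -
        6 * ρ * s = 3 * (s - ρ) ^ 2 + 1 from by field_simp; ring]
    have hDneg : (-1 : ℝ) + -(3 * (s - ρ) ^ 2) ≠ 0 := by nlinarith [sq_nonneg (s - ρ)]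
    field_simp [hne, hs.ne', ht.ne', hDval, hDneg]
    ring_nf
    simp only [hT8, hT7, hT6, hT5, hT4, hT3, ht2]
    ring
  · rw [hbfun]
    refine hbd'.congr_deriv ?_
    symm
    rw [hθval, hβval, hσval, hk]
    field_simp [hne, hs.ne', ht.ne', hDval]
    ring_nf
    simp only [hT8, hT7, hT6, hT5, hT4, hT3, ht2]
    ring
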